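/- arXiv:1107.2349 — 2 statements merged into one kernel-verified Lean document; each statement's English description precedes it below -/
import Mathlib

section
/- Let (R, m) be a Noetherian local ring and f ∈ m. Suppose given, for all i ∈ ℤ, finitely generated R-modules A^i, B^i and R-modules V^i, W^i fitting into two long exact sequences: ⋯ → A^{i-1} →^{×f} A^{i-1} →^{α_i} V^i →^{δ_i} A^i →^{×f} A^i → ⋯ and ⋯ → B^{i-1} →^{×f} B^{i-1} →^{β_i} W^i → B^i →^{×f} B^i → ⋯, together with R-linear maps Φ^i : B^i → A^i and γ_i : W^i → V^i making all squares commute. If every Φ^i is injective and every γ_i is surjective, then every Φ^i is an isomorphism. -/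
/-- Diagram chase in a commutative ladder of two long exact sequences
`⋯ → A^i →(×f) A^i →(a i) V^(i+1) →(d (i+1)) A^(i+1) → ⋯` and
`⋯ → B^i →(×f) B^i →(b i) W^(i+1) →(e (i+1)) B^(i+1) → ⋯`
with vertical maps `Φ^i : B^i → A^i` injective and `γ^i : W^i → V^i` surjective:
if moreover `R` is Noetherian local, `f` belongs to the maximal ideal, the modules
`A^i`, `B^i` are finitely generated and vanish outside a bounded range of indices,
then every `Φ^i` is an isomorphism. -/
theorem ladder_isomorphism {R : Type*} [CommRing R] [IsNoetherianRing R] [IsLocalRing R]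
    (f : R) (hf : f ∈ IsLocalRing.maximalIdeal R)
    (A B V W : ℤ → Type*)
    [∀ i, AddCommGroup (A i)] [∀ i, Module R (A i)]
    [∀ i, AddCommGroup (B i)] [∀ i, Module R (B i)]
    [∀ i, AddCommGroup (V i)] [∀ i, Module R (V i)]
    [∀ i, AddCommGroup (W i)] [∀ i, Module R (W i)]
    [∀ i, Module.Finite R (A i)] [∀ i, Module.Finite R (B i)]
    (a : ∀ i, A i →ₗ[R] V (i + 1)) (d : ∀ i, V i →ₗ[R] A i)
    (b : ∀ i, B i →ₗ[R] W (i + 1)) (e : ∀ i, W i →ₗ[R] B i)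
    (Φ : ∀ i, B i →ₗ[R] A i) (γ : ∀ i, W i →ₗ[R] V i)
    -- exactness of the top row
    (hA1 : ∀ i, Function.Exact (fun x : A i => f • x) (a i))
    (hA2 : ∀ i, Function.Exact (a i) (d (i + 1)))
    (hA3 : ∀ i, Function.Exact (d i) (fun x : A i => f • x))
    -- exactness of the bottom row
    (hB1 : ∀ i, Function.Exact (fun x : B i => f • x) (b i))
    (hB2 : ∀ i, Function.Exact (b i) (e (i + 1)))
    (hB3 : ∀ i, Function.Exact (e i) (fun x : B i => f • x))
    -- commutativity of the squares
    (hsq1 : ∀ i, (a i).comp (Φ i) = (γ (i + 1)).comp (b i))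
    (hsq2 : ∀ i, (Φ i).comp (e i) = (d i).comp (γ i))
    -- vertical maps injective / surjective
    (hΦ : ∀ i, Function.Injective (Φ i))
    (hγ : ∀ i, Function.Surjective (γ i))
    -- boundedness: only finitely many `A^i`, `B^i` are nonzero
    (hbdd : ∃ n : ℤ, ∀ i : ℤ, n < |i| →
      ((∀ x : A i, x = 0) ∧ ∀ x : B i, x = 0)) :
    ∀ i, Function.Bijective (Φ i) := by
  -- Key diagram chase: every `x : A i` is `Φ i y + f • z`.
  have key : ∀ i, ∀ x : A i, ∃ y : B i, ∃ z : A i, x = Φ i y + f • z := by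
    intro i x
    obtain ⟨w, hw⟩ := hγ (i + 1) (a i x)
    have h1 : d (i + 1) (a i x) = 0 := (hA2 i).apply_apply_eq_zero x
    have h2 : Φ (i + 1) (e (i + 1) w) = 0 := by
      have := LinearMap.congr_fun (hsq2 (i + 1)) w
      simp only [LinearMap.coe_comp, Function.comp_apply] at this
      rw [this, hw, h1]
    have h3 : e (i + 1) w = 0 := hΦ (i + 1) (by simpa using h2)
    obtain ⟨y, hy⟩ := (hB2 i w).mp h3
    have h4 : a i (Φ i y) = a i x := by
      have := LinearMap.congr_fun (hsq1 i) y
      simp only [LinearMap.coe_comp, Function.comp_apply] at this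
      rw [this, hy, hw]
    have h5 : a i (x - Φ i y) = 0 := by rw [map_sub, h4, sub_self]
    obtain ⟨z, hz⟩ := (hA1 i (x - Φ i y)).mp h5
    simp only at hz
    exact ⟨y, z, by rw [hz]; abel⟩
  intro i
  refine ⟨hΦ i, ?_⟩
  -- Nakayama on the cokernel of `Φ i`.
  set N : Submodule R (A i) := LinearMap.range (Φ i) with hN
  suffices hNt : N = ⊤ by
    intro x
    have : x ∈ N := hNt ▸ Submodule.mem_top
    exact this
  let Q := A i ⧸ N
  have hQtop : (⊤ : Submodule R Q) ≤ (IsLocalRing.maximalIdeal R) • (⊤ : Submodule R Q) := by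
    intro q _
    obtain ⟨x, rfl⟩ := Submodule.Quotient.mk_surjective N q
    obtain ⟨y, z, rfl⟩ := key i x
    have : (Submodule.Quotient.mk (Φ i y + f • z) : Q)
        = f • (Submodule.Quotient.mk z : Q) := by
      rw [Submodule.Quotient.mk_add, ← Submodule.Quotient.mk_smul]
      have : (Submodule.Quotient.mk (Φ i y) : Q) = 0 :=
        (Submodule.Quotient.mk_eq_zero N).mpr ⟨y, rfl⟩
      rw [this, zero_add]
    rw [this]
    exact Submodule.smul_mem_smul hf Submodule.mem_top
  have hbot : (⊤ : Submodule R Q) = ⊥ :=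
    Submodule.eq_bot_of_le_smul_of_le_jacobson_bot (IsLocalRing.maximalIdeal R) ⊤
      Module.Finite.fg_top hQtop (IsLocalRing.maximalIdeal_le_jacobson ⊥)
  rw [eq_top_iff]
  intro x _
  have hx0 : (Submodule.Quotient.mk x : Q) = 0 := by
    have : (Submodule.Quotient.mk x : Q) ∈ (⊥ : Submodule R Q) := hbot ▸ Submodule.mem_top
    simpa using this
  exact (Submodule.Quotient.mk_eq_zero N).mp hx0
end

section
/- With the hypotheses of the preceding commutative diagram of two long exact sequences (Φ^i injective for all i, γ_i surjective for all i), for each i and each z ∈ A^{i-1} there exists u ∈ B^{i-1} such that z − Φ^{i-1}(u) ∈ f·A^{i-1}. Equivalently, the cokernel C^{i-1} of Φ^{i-1} satisfies C^{i-1} = f·C^{i-1}. -/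
/-- Diagram chase in a commutative ladder of two long exact sequences
`⋯ → A^i →(×f) A^i →(a i) V^(i+1) →(d (i+1)) A^(i+1) → ⋯` and
`⋯ → B^i →(×f) B^i →(b i) W^(i+1) →(e (i+1)) B^(i+1) → ⋯`
with vertical maps `Φ^i : B^i → A^i` injective and `γ^i : W^i → V^i` surjective:
every `z ∈ A^i` differs from an element of the image of `Φ^i` by an element of
`f·A^i`. -/
theorem ladder_diagram_chase {R : Type*} [CommRing R] (f : R)
    (A B V W : ℤ → Type*)
    [∀ i, AddCommGroup (A i)] [∀ i, Module R (A i)]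
    [∀ i, AddCommGroup (B i)] [∀ i, Module R (B i)]
    [∀ i, AddCommGroup (V i)] [∀ i, Module R (V i)]
    [∀ i, AddCommGroup (W i)] [∀ i, Module R (W i)]
    (a : ∀ i, A i →ₗ[R] V (i + 1)) (d : ∀ i, V i →ₗ[R] A i)
    (b : ∀ i, B i →ₗ[R] W (i + 1)) (e : ∀ i, W i →ₗ[R] B i)
    (Φ : ∀ i, B i →ₗ[R] A i) (γ : ∀ i, W i →ₗ[R] V i)
    -- exactness of the top row
    (hA1 : ∀ i, Function.Exact (fun x : A i => f • x) (a i))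
    (hA2 : ∀ i, Function.Exact (a i) (d (i + 1)))
    (hA3 : ∀ i, Function.Exact (d i) (fun x : A i => f • x))
    -- exactness of the bottom row
    (hB1 : ∀ i, Function.Exact (fun x : B i => f • x) (b i))
    (hB2 : ∀ i, Function.Exact (b i) (e (i + 1)))
    (hB3 : ∀ i, Function.Exact (e i) (fun x : B i => f • x))
    -- commutativity of the squares
    (hsq1 : ∀ i, (a i).comp (Φ i) = (γ (i + 1)).comp (b i))
    (hsq2 : ∀ i, (Φ i).comp (e i) = (d i).comp (γ i))
    -- vertical maps injective / surjective
    (hΦ : ∀ i, Function.Injective (Φ i))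
    (hγ : ∀ i, Function.Surjective (γ i)) :
    ∀ i, ∀ z : A i, ∃ u : B i, ∃ w : A i, z - Φ i u = f • w := by
  intro i z
  obtain ⟨w', hw'⟩ := hγ (i + 1) (a i z)
  have h1 : Φ (i + 1) (e (i + 1) w') = 0 := by
    have := congrArg (fun g => g w') (hsq2 (i + 1))
    simp only [LinearMap.comp_apply] at this
    rw [this, hw']
    exact (hA2 i).apply_apply_eq_zero z
  have h2 : e (i + 1) w' = 0 := hΦ (i + 1) (by simpa using h1)
  obtain ⟨u, hu⟩ := (hB2 i w').mp h2
  have h3 : a i (Φ i u) = a i z := by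
    have := congrArg (fun g => g u) (hsq1 i)
    simp only [LinearMap.comp_apply] at this
    rw [this, hu, hw']
  have h4 : a i (z - Φ i u) = 0 := by
    rw [map_sub, h3, sub_self]
  obtain ⟨w, hw⟩ := (hA1 i (z - Φ i u)).mp h4
  exact ⟨u, w, hw.symm⟩
end
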